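/- For every L > 0 the following holds: let φ_in ∈ (0, π) be the unique solution of L = (π − φ_in)/(2 sin(φ_in/2)) and set T = cos(φ_in/2) ∈ (0,1). Then there exists μ ∈ (0,1) satisfying −μ(μ + T) + (1 − T²) + √(1−μ²)·(μ + T)·tan(√(1−μ²)·L) = 0. -/

import Mathlib

open Real Filter Topology

/-- Key lemma: for any `T ∈ (0,1)` and `L > 0` the transcendental equation has a
root `μ ∈ (0,1)`. -/
lemma key_root (L T : ℝ) (hL : 0 < L) (hT0 : 0 < T) (hT1 : T < 1) :
    ∃ μ ∈ Set.Ioo (0 : ℝ) 1,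
      -μ * (μ + T) + (1 - T ^ 2)
        + Real.sqrt (1 - μ ^ 2) * (μ + T) * Real.tan (Real.sqrt (1 - μ ^ 2) * L) = 0 := by
  set F : ℝ → ℝ := fun μ =>
    -μ * (μ + T) + (1 - T ^ 2)
      + Real.sqrt (1 - μ ^ 2) * (μ + T) * Real.tan (Real.sqrt (1 - μ ^ 2) * L) with hF
  -- find μ₀ ∈ [0,1) with √(1-μ₀²)L < π/2 and F μ₀ > 0
  have hμ0 : ∃ μ₀ : ℝ, 0 ≤ μ₀ ∧ μ₀ < 1 ∧ Real.sqrt (1 - μ₀ ^ 2) * L < π / 2 ∧ 0 < F μ₀ := by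
    rcases lt_or_ge L (π / 2) with hcase | hcase
    · refine ⟨0, le_refl _, one_pos, ?_, ?_⟩
      · simpa using hcase
      · have h1 : Real.sqrt (1 - (0:ℝ) ^ 2) = 1 := by norm_num
        have htan : 0 < Real.tan L := Real.tan_pos_of_pos_of_lt_pi_div_two hL hcase
        simp only [hF, h1, one_mul]
        nlinarith [htan, hT0, hT1]
    · -- L ≥ π/2 : pick s₀ close to π/2 with tan s₀ big
      have hbig : ∀ᶠ x in 𝓝[<] (π / 2), 8 * L / (π * T) < Real.tan x :=
        Real.tendsto_tan_pi_div_two.eventually_gt_atTop _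
      have hmem : Set.Ioo (π / 4) (π / 2) ∈ 𝓝[<] (π / 2) :=
        Ioo_mem_nhdsLT_of_mem ⟨by linarith [Real.pi_pos], le_refl _⟩
      obtain ⟨s₀, hs₀tan, hs₀mem⟩ := (hbig.and (Filter.eventually_mem_set.2 hmem)).exists
      obtain ⟨hs₀l, hs₀u⟩ := hs₀mem
      have hπ : (0:ℝ) < π := Real.pi_pos
      have hs₀pos : 0 < s₀ := by linarith
      have hs₀L : s₀ < L := by linarith
      set r : ℝ := s₀ / L with hr
      have hr0 : 0 < r := div_pos hs₀pos hL
      have hr1 : r < 1 := (div_lt_one hL).2 hs₀L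
      refine ⟨Real.sqrt (1 - r ^ 2), Real.sqrt_nonneg _, ?_, ?_, ?_⟩
      · have : (1 : ℝ) - r ^ 2 < 1 := by nlinarith
        calc Real.sqrt (1 - r ^ 2) < Real.sqrt 1 := by
              apply Real.sqrt_lt_sqrt (by nlinarith) this
          _ = 1 := Real.sqrt_one
      all_goals {
        have hsq : 1 - (Real.sqrt (1 - r ^ 2)) ^ 2 = r ^ 2 := by
          rw [Real.sq_sqrt (by nlinarith)]; ring
        have hsr : Real.sqrt (1 - (Real.sqrt (1 - r ^ 2)) ^ 2) = r := by
          rw [hsq, Real.sqrt_sq hr0.le]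
        have hrL : r * L = s₀ := by rw [hr]; exact div_mul_cancel₀ s₀ hL.ne'
        first
        | (rw [hsr, hrL]; linarith)
        | (simp only [hF, hsr, hrL]
           have hμ0lt : Real.sqrt (1 - r ^ 2) < 1 := by
             have : (1 : ℝ) - r ^ 2 < 1 := by nlinarith
             calc Real.sqrt (1 - r ^ 2) < Real.sqrt 1 :=
                   Real.sqrt_lt_sqrt (by nlinarith) this
               _ = 1 := Real.sqrt_one
           have hμ0nn : 0 ≤ Real.sqrt (1 - r ^ 2) := Real.sqrt_nonneg _
           have htanpos : 0 < Real.tan s₀ := Real.tan_pos_of_pos_of_lt_pi_div_two hs₀pos hs₀u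
           have hrlb : π / (4 * L) < r := by
             rw [hr, div_lt_div_iff₀ (by linarith) hL]
             nlinarith
           have htanlb : 8 * L / (π * T) < Real.tan s₀ := hs₀tan
           have h8 : 2 < r * T * Real.tan s₀ := by
             have h1 : π / (4 * L) * T * (8 * L / (π * T)) = 2 := by
               field_simp; ring
             calc (2:ℝ) = π / (4 * L) * T * (8 * L / (π * T)) := h1.symm
               _ < r * T * (8 * L / (π * T)) := by
                   apply mul_lt_mul_of_pos_right (mul_lt_mul_of_pos_right hrlb hT0)
                   positivity
               _ ≤ r * T * Real.tan s₀ := by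
                   apply mul_le_mul_of_nonneg_left htanlb.le (by positivity)
           nlinarith [htanpos, hμ0lt, hμ0nn, hT0, hT1, hr0, h8,
             mul_le_mul_of_nonneg_right (add_le_add hμ0lt.le (le_refl T))
               (by positivity : (0:ℝ) ≤ r * Real.tan s₀)]) }
  obtain ⟨μ₀, hμ₀0, hμ₀1, hs₀, hFμ₀⟩ := hμ0
  -- F 1 < 0
  have hF1 : F 1 < 0 := by
    have h1 : Real.sqrt (1 - (1:ℝ) ^ 2) = 0 := by norm_num
    simp only [hF, h1, zero_mul, Real.tan_zero, mul_zero]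
    nlinarith
  -- monotone bound on the tan argument
  have harg : ∀ μ ∈ Set.Icc μ₀ 1, Real.sqrt (1 - μ ^ 2) * L ∈
      Set.Ioo (-(π / 2)) (π / 2) := by
    intro μ ⟨h1, h2⟩
    constructor
    · have := Real.pi_pos
      have : 0 ≤ Real.sqrt (1 - μ ^ 2) * L := by positivity
      linarith [Real.pi_pos]
    · have hle : Real.sqrt (1 - μ ^ 2) ≤ Real.sqrt (1 - μ₀ ^ 2) := by
        apply Real.sqrt_le_sqrt; nlinarith
      calc Real.sqrt (1 - μ ^ 2) * L ≤ Real.sqrt (1 - μ₀ ^ 2) * L :=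
            mul_le_mul_of_nonneg_right hle hL.le
        _ < π / 2 := hs₀
  -- continuity of F on [μ₀, 1]
  have hcont : ContinuousOn F (Set.Icc μ₀ 1) := by
    have hg : ContinuousOn (fun μ : ℝ => Real.sqrt (1 - μ ^ 2) * L) (Set.Icc μ₀ 1) := by
      fun_prop
    have htan : ContinuousOn (fun μ : ℝ => Real.tan (Real.sqrt (1 - μ ^ 2) * L))
        (Set.Icc μ₀ 1) := by
      apply Real.continuousOn_tan.comp hg
      intro μ hμ
      exact ne_of_gt (Real.cos_pos_of_mem_Ioo (harg μ hμ))
    apply ContinuousOn.add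
    · fun_prop
    · exact (ContinuousOn.mul (by fun_prop) htan)
  -- IVT
  have hsub : Set.Ioo (F 1) (F μ₀) ⊆ F '' Set.Ioo μ₀ 1 :=
    intermediate_value_Ioo' hμ₀1.le hcont
  have h0mem : (0:ℝ) ∈ Set.Ioo (F 1) (F μ₀) := ⟨hF1, hFμ₀⟩
  obtain ⟨μ, hμmem, hμF⟩ := hsub h0mem
  exact ⟨μ, ⟨lt_of_le_of_lt hμ₀0 hμmem.1, hμmem.2⟩, hμF⟩

theorem stmt9 (L : ℝ) (hL : 0 < L) :
    (∃! φin : ℝ, φin ∈ Set.Ioo 0 π ∧ L = (π - φin) / (2 * Real.sin (φin / 2))) ∧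
    (∀ φin : ℝ, φin ∈ Set.Ioo 0 π → L = (π - φin) / (2 * Real.sin (φin / 2)) →
      Real.cos (φin / 2) ∈ Set.Ioo (0 : ℝ) 1 ∧
      ∃ μ ∈ Set.Ioo (0 : ℝ) 1,
        -μ * (μ + Real.cos (φin / 2)) + (1 - Real.cos (φin / 2) ^ 2)
          + Real.sqrt (1 - μ ^ 2) * (μ + Real.cos (φin / 2)) *
              Real.tan (Real.sqrt (1 - μ ^ 2) * L) = 0) := by
  have hπ : (0:ℝ) < π := Real.pi_pos
  set f : ℝ → ℝ := fun φ => (π - φ) / (2 * Real.sin (φ / 2)) with hf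
  have hsin : ∀ φ ∈ Set.Ioo (0:ℝ) π, 0 < Real.sin (φ / 2) := by
    intro φ ⟨h1, h2⟩
    apply Real.sin_pos_of_pos_of_lt_pi (by linarith)
    linarith
  -- f is strictly anti on (0, π)
  have hanti : StrictAntiOn f (Set.Ioo 0 π) := by
    intro a ha b hb hab
    have hsa := hsin a ha
    have hsb := hsin b hb
    have hmono : Real.sin (a / 2) < Real.sin (b / 2) := by
      apply Real.strictMonoOn_sin ⟨by linarith [ha.1], by linarith [ha.2]⟩
        ⟨by linarith [hb.1], by linarith [hb.2]⟩ (by linarith)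
    have h1 : f b < (π - a) / (2 * Real.sin (b / 2)) := by
      apply div_lt_div_of_pos_right (by linarith [hb.2] : π - b < π - a) (by linarith)
    have h2 : (π - a) / (2 * Real.sin (b / 2)) < f a := by
      apply div_lt_div_of_pos_left (by linarith [ha.2]) (by linarith) (by linarith)
    linarith
  -- existence of a root of f = L via IVT on [a, b]
  set a : ℝ := min (π / (L + 1)) (π / 2) with ha_def
  set b : ℝ := π - min L (π / 4) with hb_def
  have ha0 : 0 < a := lt_min (by positivity) (by positivity)
  have haπ2 : a ≤ π / 2 := min_le_right _ _
  have hminpos : 0 < min L (π / 4) := lt_min hL (by positivity)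
  have hbπ : b < π := by simp only [hb_def]; linarith
  have hb34 : 3 * π / 4 ≤ b := by
    have : min L (π / 4) ≤ π / 4 := min_le_right _ _
    simp only [hb_def]; linarith
  have hab : a < b :=
    lt_of_le_of_lt haπ2 (lt_of_lt_of_le (by linarith : π / 2 < 3 * π / 4) hb34)
  have haIoo : a ∈ Set.Ioo (0:ℝ) π := ⟨ha0, by linarith⟩
  have hbIoo : b ∈ Set.Ioo (0:ℝ) π := ⟨by linarith, hbπ⟩
  -- f a > L
  have hfa : L < f a := by
    have hsa := hsin a haIoo
    have hslt : Real.sin (a / 2) < a / 2 := Real.sin_lt (by linarith)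
    have h1 : (π - a) / a < f a := by
      apply div_lt_div_of_pos_left (by linarith) (by linarith) (by linarith)
    have h2 : L ≤ (π - a) / a := by
      rw [le_div_iff₀ ha0]
      have haL : a ≤ π / (L + 1) := min_le_left _ _
      have : a * (L + 1) ≤ π := by
        rw [← le_div_iff₀ (by linarith)] at *
        exact haL
      nlinarith
    linarith
  -- f b < L
  have hfb : f b < L := by
    have hsb := hsin b hbIoo
    have hs2 : Real.sqrt 2 / 2 ≤ Real.sin (b / 2) := by
      rw [← Real.sin_pi_div_four]
      apply Real.sin_le_sin_of_le_of_le_pi_div_two (by linarith) (by linarith)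
      linarith
    have hπb : π - b = min L (π / 4) := by simp only [hb_def]; ring
    have h2lt : (1:ℝ) < 2 * Real.sin (b / 2) := by
      have : (1:ℝ) < Real.sqrt 2 := by
        rw [show (1:ℝ) = Real.sqrt 1 by simp]
        exact Real.sqrt_lt_sqrt (by norm_num) (by norm_num)
      linarith
    have h1 : f b < π - b := by
      rw [hf]
      rw [div_lt_iff₀ (by linarith)]
      nlinarith [hminpos, hπb]
    rw [hπb] at h1
    exact lt_of_lt_of_le h1 (min_le_left _ _)
  -- continuity of f on [a, b]
  have hcont : ContinuousOn f (Set.Icc a b) := by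
    apply ContinuousOn.div (by fun_prop) (by fun_prop)
    intro φ hφ
    have : φ ∈ Set.Ioo (0:ℝ) π := ⟨lt_of_lt_of_le ha0 hφ.1, lt_of_le_of_lt hφ.2 hbπ⟩
    have := hsin φ this
    positivity
  have hsub : Set.Ioo (f b) (f a) ⊆ f '' Set.Ioo a b :=
    intermediate_value_Ioo' hab.le hcont
  obtain ⟨φ₀, hφ₀mem, hφ₀f⟩ := hsub ⟨hfb, hfa⟩
  have hφ₀Ioo : φ₀ ∈ Set.Ioo (0:ℝ) π :=
    ⟨lt_trans ha0 hφ₀mem.1, lt_trans hφ₀mem.2 hbπ⟩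
  constructor
  · refine ⟨φ₀, ⟨hφ₀Ioo, hφ₀f.symm⟩, ?_⟩
    rintro y ⟨hyIoo, hyf⟩
    exact hanti.injOn hyIoo hφ₀Ioo (hyf.symm.trans hφ₀f.symm)
  · intro φin hφin _
    have hcosmem : Real.cos (φin / 2) ∈ Set.Ioo (0:ℝ) 1 := by
      constructor
      · apply Real.cos_pos_of_mem_Ioo
        constructor <;> [linarith [hφin.1]; linarith [hφin.2]]
      · have h := Real.cos_lt_cos_of_nonneg_of_le_pi (le_refl (0:ℝ))
          (by linarith [hφin.2] : φin / 2 ≤ π) (by linarith [hφin.1] : (0:ℝ) < φin / 2)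
        simpa using h
    exact ⟨hcosmem, key_root L _ hL hcosmem.1 hcosmem.2⟩
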